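/- Let (ω,Σ) be a weight system with at least two priority levels on a finite player set N and let G=(N,E) be a graph preserving (ω,Σ)-convexity. Let k, k', k'' be priority levels with k ≤ k' < k''. Let C_1 be a connected component of G_k and C_2 a connected component of G_{k'}, each linked (i.e., joined by at least one edge of G) to a connected component C of G_{k''}. Then there exists a vertex i of C such that some vertex of C_1 is adjacent to i and some vertex of C_2 is adjacent to i. -/

import Mathlib

open Finset

variable {α : Type*}

noncomputable section

open scoped Classical

/-- `ω̄^S_i`: the weight of `i` if `i` belongs to the top-priority part `S̄` of `S`, else `0`.
Here the ordered partition `Σ` is encoded by the priority function `p`. -/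
def wbar [DecidableEq α] (ω : α → ℝ) (p : α → ℕ) (S : Finset α) (i : α) : ℝ :=
  if i ∈ S ∧ p i = S.sup p then ω i else 0

/-- `(ω,Σ)`-convexity of a TU-game `v`. -/
def WConvex [DecidableEq α] (ω : α → ℝ) (p : α → ℕ) (v : Finset α → ℝ) : Prop :=
  ∀ S T : Finset α, S ⊂ T →
    0 ≤ ∑ i ∈ S, wbar ω p T i * (v T - v (T.erase i) - v S + v (S.erase i))

/-- The connected component of `i` in the subgraph of `G` induced by `S`. -/
def compOf [Fintype α] (G : SimpleGraph α) (S : Finset α) (i : α) : Finset α :=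
  S.filter fun j => Relation.ReflTransGen (fun a b => a ∈ S ∧ b ∈ S ∧ G.Adj a b) i j

/-- The communication game `v^G`: `v^G(S)` is the sum of `v` over the (vertex sets of the)
connected components of the subgraph of `G` induced by `S`. -/
def commGame [Fintype α] [DecidableEq α] (G : SimpleGraph α)
    (v : Finset α → ℝ) (S : Finset α) : ℝ :=
  ∑ A ∈ S.image (compOf G S), v A

/-- `G` preserves `(ω,Σ)`-convexity. -/
def Preserves [Fintype α] [DecidableEq α] (G : SimpleGraph α)
    (ω : α → ℝ) (p : α → ℕ) : Prop :=
  ∀ v : Finset α → ℝ, v ∅ = 0 → WConvex ω p v → WConvex ω p (commGame G v)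

/-- The set of players of priority `k`. -/
def level [Fintype α] (p : α → ℕ) (k : ℕ) : Finset α :=
  Finset.univ.filter fun i => p i = k

/-- The vertex set `C` induces a complete subgraph of `G`. -/
def IsCompleteOn (G : SimpleGraph α) (C : Finset α) : Prop :=
  ∀ x ∈ C, ∀ y ∈ C, x ≠ y → G.Adj x y

/-- The subgraph of `G` induced by `C` is a star with center `c`: within `C`, `c` is adjacent
to all other vertices and there are no other edges. -/
def IsStarOnCenter (G : SimpleGraph α) (C : Finset α) (c : α) : Prop :=
  ∀ x ∈ C, ∀ y ∈ C, (G.Adj x y ↔ x ≠ y ∧ (x = c ∨ y = c))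

/-- The subgraph of `G` induced by `C` is a star. -/
def IsStarOn (G : SimpleGraph α) (C : Finset α) : Prop :=
  ∃ c ∈ C, IsStarOnCenter G C c

/-- `A` and `B` are linked: some edge of `G` joins a vertex of `A` to a vertex of `B`. -/
def Linked (G : SimpleGraph α) (A B : Finset α) : Prop :=
  ∃ a ∈ A, ∃ b ∈ B, G.Adj a b

-- ========================== auxiliary development ==========================
set_option linter.unusedSectionVars false
set_option maxHeartbeats 1000000

-- choose 2 casts
lemma choose2_cast (n : ℕ) : ((n.choose 2 : ℕ) : ℝ) = (n : ℝ) * ((n : ℝ) - 1) / 2 :=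
  Nat.cast_choose_two (K := ℝ) n

lemma choose2_diff {n : ℕ} (h : 1 ≤ n) :
    ((n.choose 2 : ℕ) : ℝ) - (((n-1).choose 2 : ℕ) : ℝ) = (n : ℝ) - 1 := by
  rw [choose2_cast, choose2_cast]
  have : ((n - 1 : ℕ) : ℝ) = (n : ℝ) - 1 := by
    push_cast [h]; ring
  rw [this]; ring


namespace LCAux



lemma rtg_symm {r : α → α → Prop} (hsym : ∀ {x y : α}, r x y → r y x) {x y : α}
    (h : Relation.ReflTransGen r x y) : Relation.ReflTransGen r y x := by
  induction h with
  | refl => exact .refl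
  | tail _ h2 ih => exact (Relation.ReflTransGen.single (hsym h2)).trans ih

variable [Fintype α] [DecidableEq α] {G : SimpleGraph α}

/-- relation used by `compOf` -/
def rel (G : SimpleGraph α) (S : Finset α) (x y : α) : Prop :=
  x ∈ S ∧ y ∈ S ∧ G.Adj x y

lemma rel_symm {S : Finset α} {x y : α} (h : rel G S x y) : rel G S y x :=
  ⟨h.2.1, h.1, h.2.2.symm⟩

lemma mem_compOf {S : Finset α} {x y : α} :
    y ∈ compOf G S x ↔ y ∈ S ∧ Relation.ReflTransGen (rel G S) x y := by
  simp only [compOf, Finset.mem_filter]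
  exact Iff.rfl

/-- connectivity of a finset within itself -/
def Conn (G : SimpleGraph α) (S : Finset α) : Prop :=
  ∀ x ∈ S, ∀ y ∈ S, Relation.ReflTransGen (rel G S) x y

lemma compOf_eq_self {S : Finset α} (hconn : Conn G S) {x : α} (hx : x ∈ S) :
    compOf G S x = S := by
  apply Finset.Subset.antisymm
  · intro y hy; exact (mem_compOf.1 hy).1
  · intro y hy; exact mem_compOf.2 ⟨hy, hconn x hx y hy⟩

lemma commGame_of_conn {S : Finset α} (hne : S.Nonempty) (hconn : Conn G S)
    (v : Finset α → ℝ) : commGame G v S = v S := by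
  unfold commGame
  have h1 : S.image (compOf G S) = {S} := by
    rw [Finset.image_congr (g := fun _ => S) (fun x hx => compOf_eq_self hconn hx)]
    exact Finset.image_const hne S
  rw [h1, Finset.sum_singleton]

lemma compOf_union_left {A B : Finset α} (hA : Conn G A)
    (hcross : ∀ x ∈ A, ∀ y ∈ B, ¬ G.Adj x y) {x : α} (hx : x ∈ A) :
    compOf G (A ∪ B) x = A := by
  apply Finset.Subset.antisymm
  · intro y hy
    obtain ⟨hyS, hr⟩ := mem_compOf.1 hy
    clear hy hyS
    induction hr with
    | refl => exact hx
    | tail _ h2 ih =>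
      rcases Finset.mem_union.1 h2.2.1 with h | h
      · exact h
      · exact absurd h2.2.2 (hcross _ ih _ h)
  · intro y hy
    refine mem_compOf.2 ⟨Finset.mem_union_left _ hy, ?_⟩
    refine Relation.ReflTransGen.mono ?_ x y (hA x hx y hy)
    intro u w h
    exact ⟨Finset.mem_union_left _ h.1, Finset.mem_union_left _ h.2.1, h.2.2⟩

lemma commGame_pair {A B : Finset α} (hA : Conn G A) (hB : Conn G B)
    (hAne : A.Nonempty) (hBne : B.Nonempty) (hdisj : Disjoint A B)
    (hcross : ∀ x ∈ A, ∀ y ∈ B, ¬ G.Adj x y) (v : Finset α → ℝ) :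
    commGame G v (A ∪ B) = v A + v B := by
  have hcross' : ∀ x ∈ B, ∀ y ∈ A, ¬ G.Adj x y := by
    intro x hx y hy h; exact hcross y hy x hx h.symm
  have hAB : A ≠ B := by
    rintro rfl
    obtain ⟨x, hx⟩ := hAne
    exact (Finset.disjoint_left.1 hdisj hx) hx
  have h1 : ∀ x ∈ A, compOf G (A ∪ B) x = A := fun x hx => compOf_union_left hA hcross hx
  have h2 : ∀ x ∈ B, compOf G (A ∪ B) x = B := by
    intro x hx
    rw [Finset.union_comm]
    exact compOf_union_left hB hcross' hx
  unfold commGame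
  have himg : (A ∪ B).image (compOf G (A ∪ B)) = {A, B} := by
    rw [Finset.image_union]
    rw [Finset.image_congr (g := fun _ => A) (fun x hx => h1 x hx),
        Finset.image_congr (g := fun _ => B) (fun x hx => h2 x hx),
        Finset.image_const hAne, Finset.image_const hBne]
    rfl
  rw [himg, Finset.sum_pair hAB]

lemma conn_of_path (f : ℕ → α) (n : ℕ) (S : Finset α)
    (hS : S = (Finset.range (n+1)).image f)
    (hadj : ∀ i < n, G.Adj (f i) (f (i+1))) : Conn G S := by
  have hmem : ∀ i ≤ n, f i ∈ S := by
    intro i hi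
    rw [hS]
    exact Finset.mem_image.2 ⟨i, Finset.mem_range.2 (Nat.lt_succ_of_le hi), rfl⟩
  have key : ∀ i ≤ n, Relation.ReflTransGen (rel G S) (f 0) (f i) := by
    intro i hi
    induction i with
    | zero => exact .refl
    | succ t ih =>
      refine Relation.ReflTransGen.tail (ih (by omega)) ?_
      exact ⟨hmem t (by omega), hmem (t+1) hi, hadj t (by omega)⟩
  intro x hx y hy
  rw [hS] at hx hy
  obtain ⟨i, hi, rfl⟩ := Finset.mem_image.1 hx
  obtain ⟨j, hj, rfl⟩ := Finset.mem_image.1 hy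
  rw [Finset.mem_range] at hi hj
  exact (rtg_symm (fun {u w} h => rel_symm h) (key i (by omega))).trans (key j (by omega))


section
variable [DecidableEq α]

lemma wconv_v1 (ω : α → ℝ) (hω : ∀ i, 0 < ω i) (p : α → ℕ) (K : ℕ)
    (a b : α) (q : ℕ → α) (m : ℕ)
    (hpa : p a < K) (hpb : p b < K) (hpq : ∀ j ≤ m, p (q j) = K) :
    WConvex ω p (fun X =>
      ((X ∩ (insert a ((Finset.range (m+1)).image q))).card.choose 2 : ℝ) +
      (if b ∈ X ∧ a ∉ X ∧ (X ∩ ((Finset.range (m+1)).image q)).Nonempty then 1 else 0)) := by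
  intro S T hST
  set Q : Finset α := (Finset.range (m+1)).image q with hQdef
  set P : Finset α := insert a Q with hPdef
  have hQp : ∀ x ∈ Q, p x = K := by
    intro x hx
    obtain ⟨j, hj, rfl⟩ := Finset.mem_image.1 hx
    exact hpq j (by simpa [Nat.lt_succ_iff] using hj)
  have haQ : a ∉ Q := fun h => by have := hQp a h; omega
  have hbQ : b ∉ Q := fun h => by have := hQp b h; omega
  have hsub : S ⊆ T := hST.subset
  apply Finset.sum_nonneg
  intro i hiS
  rw [wbar]
  by_cases hw : i ∈ T ∧ p i = T.sup p
  swap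
  · rw [if_neg hw, zero_mul]
  rw [if_pos hw]
  apply mul_nonneg (hω i).le
  simp only
  by_cases hiQ : i ∈ Q
  · -- main case : i is a path vertex
    have hia : i ≠ a := fun h => haQ (h ▸ hiQ)
    have hib : i ≠ b := fun h => hbQ (h ▸ hiQ)
    have hiP : i ∈ P := Finset.mem_insert_of_mem hiQ
    have hiT : i ∈ T := hw.1
    have hiTP : i ∈ T ∩ P := Finset.mem_inter.2 ⟨hiT, hiP⟩
    have hiSP : i ∈ S ∩ P := Finset.mem_inter.2 ⟨hiS, hiP⟩
    have hET : T.erase i ∩ P = (T ∩ P).erase i := by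
      ext z
      simp only [Finset.mem_inter, Finset.mem_erase]
      tauto
    have hES : S.erase i ∩ P = (S ∩ P).erase i := by
      ext z
      simp only [Finset.mem_inter, Finset.mem_erase]
      tauto
    have h1T : 1 ≤ (T ∩ P).card := Finset.card_pos.2 ⟨i, hiTP⟩
    have h1S : 1 ≤ (S ∩ P).card := Finset.card_pos.2 ⟨i, hiSP⟩
    rw [hET, hES, Finset.card_erase_of_mem hiTP, Finset.card_erase_of_mem hiSP]
    have eT := choose2_diff h1T
    have eS := choose2_diff h1S
    have hmono : S ∩ P ⊆ T ∩ P := Finset.inter_subset_inter_right hsub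
    have hcard : (S ∩ P).card ≤ (T ∩ P).card := Finset.card_le_card hmono
    -- indicator monotonicity under erase
    have hmonoT : (b ∈ T.erase i ∧ a ∉ T.erase i ∧ ((T.erase i) ∩ Q).Nonempty) →
        (b ∈ T ∧ a ∉ T ∧ (T ∩ Q).Nonempty) := by
      rintro ⟨h1, h2, y, hy⟩
      refine ⟨Finset.mem_of_mem_erase h1, fun ha => h2 (Finset.mem_erase.2 ⟨fun h => hia h.symm, ha⟩), ⟨y, ?_⟩⟩
      rw [Finset.mem_inter] at hy ⊢
      exact ⟨Finset.mem_of_mem_erase hy.1, hy.2⟩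
    have hmonoS : (b ∈ S.erase i ∧ a ∉ S.erase i ∧ ((S.erase i) ∩ Q).Nonempty) →
        (b ∈ S ∧ a ∉ S ∧ (S ∩ Q).Nonempty) := by
      rintro ⟨h1, h2, y, hy⟩
      refine ⟨Finset.mem_of_mem_erase h1, fun ha => h2 (Finset.mem_erase.2 ⟨fun h => hia h.symm, ha⟩), ⟨y, ?_⟩⟩
      rw [Finset.mem_inter] at hy ⊢
      exact ⟨Finset.mem_of_mem_erase hy.1, hy.2⟩
    have hindT : (0:ℝ) ≤ (if b ∈ T ∧ a ∉ T ∧ (T ∩ Q).Nonempty then 1 else 0) -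
        (if b ∈ T.erase i ∧ a ∉ T.erase i ∧ ((T.erase i) ∩ Q).Nonempty then 1 else 0) := by
      by_cases h : b ∈ T.erase i ∧ a ∉ T.erase i ∧ ((T.erase i) ∩ Q).Nonempty
      · rw [if_pos h, if_pos (hmonoT h)]; norm_num
      · rw [if_neg h]
        split <;> norm_num
    rcases eq_or_lt_of_le hcard with hc | hc
    · -- equal cards : equal intersections
      have hEq : S ∩ P = T ∩ P := Finset.eq_of_subset_of_card_le hmono (le_of_eq hc.symm)
      have hDle : ((if b ∈ S ∧ a ∉ S ∧ (S ∩ Q).Nonempty then (1:ℝ) else 0) -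
          (if b ∈ S.erase i ∧ a ∉ S.erase i ∧ ((S.erase i) ∩ Q).Nonempty then 1 else 0)) ≤
          ((if b ∈ T ∧ a ∉ T ∧ (T ∩ Q).Nonempty then 1 else 0) -
          (if b ∈ T.erase i ∧ a ∉ T.erase i ∧ ((T.erase i) ∩ Q).Nonempty then 1 else 0)) := by
        by_cases hcS : b ∈ S ∧ a ∉ S ∧ (S ∩ Q).Nonempty
        · by_cases hcS' : b ∈ S.erase i ∧ a ∉ S.erase i ∧ ((S.erase i) ∩ Q).Nonempty
          · rw [if_pos hcS, if_pos hcS']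
            linarith [hindT]
          · -- dS = 1 ; show dT = 1
            have hcT : b ∈ T ∧ a ∉ T ∧ (T ∩ Q).Nonempty := by
              refine ⟨hsub hcS.1, ?_, ⟨i, Finset.mem_inter.2 ⟨hiT, hiQ⟩⟩⟩
              intro haT
              have : a ∈ T ∩ P := Finset.mem_inter.2 ⟨haT, Finset.mem_insert_self a Q⟩
              rw [← hEq] at this
              exact hcS.2.1 (Finset.mem_inter.1 this).1
            have hSQ : (S.erase i) ∩ Q = ∅ := by
              by_contra hne
              apply hcS'
              refine ⟨Finset.mem_erase.2 ⟨fun h => hib h.symm, hcS.1⟩,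
                fun h => hcS.2.1 (Finset.mem_of_mem_erase h), ?_⟩
              exact Finset.nonempty_of_ne_empty hne
            have hcT' : ¬ (b ∈ T.erase i ∧ a ∉ T.erase i ∧ ((T.erase i) ∩ Q).Nonempty) := by
              rintro ⟨-, -, y, hy⟩
              rw [Finset.mem_inter, Finset.mem_erase] at hy
              have hyS : y ∈ S := by
                have : y ∈ T ∩ P := Finset.mem_inter.2 ⟨hy.1.2, Finset.mem_insert_of_mem hy.2⟩
                rw [← hEq] at this
                exact (Finset.mem_inter.1 this).1
              have : y ∈ (S.erase i) ∩ Q :=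
                Finset.mem_inter.2 ⟨Finset.mem_erase.2 ⟨hy.1.1, hyS⟩, hy.2⟩
              rw [hSQ] at this
              exact absurd this (Finset.notMem_empty y)
            rw [if_pos hcS, if_neg hcS', if_pos hcT, if_neg hcT']
        · have hcS' : ¬ (b ∈ S.erase i ∧ a ∉ S.erase i ∧ ((S.erase i) ∩ Q).Nonempty) :=
            fun h => hcS (hmonoS h)
          rw [if_neg hcS, if_neg hcS']
          linarith [hindT]
      rw [hc]
      linarith [hDle]
    · -- strict card increase
      have hx : ((S ∩ P).card : ℝ) + 1 ≤ ((T ∩ P).card : ℝ) := by exact_mod_cast hc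
      have hindS1 : (if b ∈ S ∧ a ∉ S ∧ (S ∩ Q).Nonempty then (1:ℝ) else 0) ≤ 1 := by
        split <;> norm_num
      have hindS0 : (0:ℝ) ≤ (if b ∈ S.erase i ∧ a ∉ S.erase i ∧ ((S.erase i) ∩ Q).Nonempty then 1 else 0) := by
        split <;> norm_num
      linarith [hindT, hindS1, hindS0, choose2_diff h1T, choose2_diff h1S, hx]
  · -- i not a path vertex
    by_cases hia : i = a
    · -- top priority of T is p a < K : no path vertex in T, the game vanishes
      have hpi : p i < K := by rw [hia]; exact hpa
      have hTQ : ∀ x ∈ Q, x ∉ T := by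
        intro x hx hxT
        have h1 := Finset.le_sup (f := p) hxT
        rw [hQp x hx, ← hw.2] at h1
        omega
      have hzero : ∀ X : Finset α, X ⊆ T →
          ((X ∩ P).card.choose 2 : ℝ) +
          (if b ∈ X ∧ a ∉ X ∧ (X ∩ Q).Nonempty then 1 else 0) = 0 := by
        intro X hX
        have h1 : X ∩ Q = ∅ := by
          rw [Finset.eq_empty_iff_forall_notMem]
          intro x hx
          rw [Finset.mem_inter] at hx
          exact hTQ x hx.2 (hX hx.1)
        have h2 : X ∩ P ⊆ {a} := by
          intro x hx
          rw [Finset.mem_inter, hPdef, Finset.mem_insert] at hx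
          rcases hx.2 with h | h
          · simp [h]
          · exact absurd (hX hx.1) (hTQ x h)
        have h3 : (X ∩ P).card ≤ 1 := le_trans (Finset.card_le_card h2) (by simp)
        rw [Nat.choose_eq_zero_of_lt (by omega), if_neg]
        · simp
        · rintro ⟨-, -, hne⟩
          rw [h1] at hne
          exact absurd hne Finset.not_nonempty_empty
      rw [hzero T subset_rfl, hzero S hsub, hzero (T.erase i) (Finset.erase_subset _ _),
        hzero (S.erase i) (le_trans (Finset.erase_subset _ _) hsub)]
      norm_num
    · by_cases hib : i = b
      · have hpi : p i < K := by rw [hib]; exact hpb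
        have hTQ : ∀ x ∈ Q, x ∉ T := by
          intro x hx hxT
          have h1 := Finset.le_sup (f := p) hxT
          rw [hQp x hx, ← hw.2] at h1
          omega
        have hzero : ∀ X : Finset α, X ⊆ T →
            ((X ∩ P).card.choose 2 : ℝ) +
            (if b ∈ X ∧ a ∉ X ∧ (X ∩ Q).Nonempty then 1 else 0) = 0 := by
          intro X hX
          have h1 : X ∩ Q = ∅ := by
            rw [Finset.eq_empty_iff_forall_notMem]
            intro x hx
            rw [Finset.mem_inter] at hx
            exact hTQ x hx.2 (hX hx.1)
          have h2 : X ∩ P ⊆ {a} := by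
            intro x hx
            rw [Finset.mem_inter, hPdef, Finset.mem_insert] at hx
            rcases hx.2 with h | h
            · simp [h]
            · exact absurd (hX hx.1) (hTQ x h)
          have h3 : (X ∩ P).card ≤ 1 := le_trans (Finset.card_le_card h2) (by simp)
          rw [Nat.choose_eq_zero_of_lt (by omega), if_neg]
          · simp
          · rintro ⟨-, -, hne⟩
            rw [h1] at hne
            exact absurd hne Finset.not_nonempty_empty
        rw [hzero T subset_rfl, hzero S hsub, hzero (T.erase i) (Finset.erase_subset _ _),
          hzero (S.erase i) (le_trans (Finset.erase_subset _ _) hsub)]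
        norm_num
      · -- i is outside W : erasing i changes nothing
        have hiP : i ∉ P := by
          rw [hPdef, Finset.mem_insert]
          rintro (h | h)
          · exact hia h
          · exact hiQ h
        have hkey : ∀ X : Finset α,
            ((X.erase i ∩ P).card.choose 2 : ℝ) +
            (if b ∈ X.erase i ∧ a ∉ X.erase i ∧ ((X.erase i) ∩ Q).Nonempty then 1 else 0) =
            ((X ∩ P).card.choose 2 : ℝ) +
            (if b ∈ X ∧ a ∉ X ∧ (X ∩ Q).Nonempty then 1 else 0) := by
          intro X
          have h1 : X.erase i ∩ P = X ∩ P := by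
            ext z
            simp only [Finset.mem_inter, Finset.mem_erase]
            constructor
            · rintro ⟨⟨-, h⟩, h2⟩; exact ⟨h, h2⟩
            · rintro ⟨h, h2⟩; exact ⟨⟨fun hz => hiP (hz ▸ h2), h⟩, h2⟩
          have h2 : X.erase i ∩ Q = X ∩ Q := by
            ext z
            simp only [Finset.mem_inter, Finset.mem_erase]
            constructor
            · rintro ⟨⟨-, h⟩, h2⟩; exact ⟨h, h2⟩
            · rintro ⟨h, h2⟩; exact ⟨⟨fun hz => hiQ (hz ▸ h2), h⟩, h2⟩
          have h3 : (b ∈ X.erase i) ↔ (b ∈ X) := by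
            simp only [Finset.mem_erase, and_iff_right_iff_imp]
            exact fun h hbi => hib hbi.symm
          have h4 : (a ∈ X.erase i) ↔ (a ∈ X) := by
            simp only [Finset.mem_erase, and_iff_right_iff_imp]
            exact fun h hai => hia hai.symm
          rw [h1, h2]
          congr 1
          apply if_congr _ rfl rfl
          rw [h3, h4]
        rw [hkey T, hkey S]
        linarith


lemma wconv_v4 [DecidableEq α] (ω : α → ℝ) (hω : ∀ i, 0 < ω i) (p : α → ℕ) (K : ℕ)
    (a b : α) (q : ℕ → α) (m : ℕ)
    (hpa : p a < K) (hpb : p b < K) (hpq : ∀ j ≤ m, p (q j) = K) (hab : a ≠ b) :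
    WConvex ω p (fun X =>
      ((X ∩ (insert a (insert b ((Finset.range (m+1)).image q)))).card.choose 2 : ℝ) -
      (if a ∈ X ∧ b ∈ X ∧ ((Finset.range (m+1)).image q) ⊆ X then 1 else 0)) := by
  intro S T hST
  set Q : Finset α := (Finset.range (m+1)).image q with hQdef
  set W : Finset α := insert a (insert b Q) with hWdef
  have hQp : ∀ x ∈ Q, p x = K := by
    intro x hx
    obtain ⟨j, hj, rfl⟩ := Finset.mem_image.1 hx
    exact hpq j (by simpa [Nat.lt_succ_iff] using hj)
  have haQ : a ∉ Q := fun h => by have := hQp a h; omega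
  have hbQ : b ∉ Q := fun h => by have := hQp b h; omega
  have hq0Q : q 0 ∈ Q := Finset.mem_image.2 ⟨0, Finset.mem_range.2 (by omega), rfl⟩
  have hsub : S ⊆ T := hST.subset
  apply Finset.sum_nonneg
  intro i hiS
  rw [wbar]
  by_cases hw : i ∈ T ∧ p i = T.sup p
  swap
  · rw [if_neg hw, zero_mul]
  rw [if_pos hw]
  apply mul_nonneg (hω i).le
  simp only
  by_cases hiQ : i ∈ Q
  · -- main case : i is a path vertex
    have hia : i ≠ a := fun h => haQ (h ▸ hiQ)
    have hib : i ≠ b := fun h => hbQ (h ▸ hiQ)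
    have hiW : i ∈ W := by
      rw [hWdef]
      exact Finset.mem_insert_of_mem (Finset.mem_insert_of_mem hiQ)
    have hiT : i ∈ T := hw.1
    have hiTW : i ∈ T ∩ W := Finset.mem_inter.2 ⟨hiT, hiW⟩
    have hiSW : i ∈ S ∩ W := Finset.mem_inter.2 ⟨hiS, hiW⟩
    have hET : T.erase i ∩ W = (T ∩ W).erase i := by
      ext z
      simp only [Finset.mem_inter, Finset.mem_erase]
      tauto
    have hES : S.erase i ∩ W = (S ∩ W).erase i := by
      ext z
      simp only [Finset.mem_inter, Finset.mem_erase]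
      tauto
    have h1T : 1 ≤ (T ∩ W).card := Finset.card_pos.2 ⟨i, hiTW⟩
    have h1S : 1 ≤ (S ∩ W).card := Finset.card_pos.2 ⟨i, hiSW⟩
    rw [hET, hES, Finset.card_erase_of_mem hiTW, Finset.card_erase_of_mem hiSW]
    have hmono : S ∩ W ⊆ T ∩ W := Finset.inter_subset_inter_right hsub
    have hcard : (S ∩ W).card ≤ (T ∩ W).card := Finset.card_le_card hmono
    have hiT' : ¬ (a ∈ T.erase i ∧ b ∈ T.erase i ∧ Q ⊆ T.erase i) := by
      rintro ⟨-, -, h⟩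
      exact (Finset.mem_erase.1 (h hiQ)).1 rfl
    have hiS' : ¬ (a ∈ S.erase i ∧ b ∈ S.erase i ∧ Q ⊆ S.erase i) := by
      rintro ⟨-, -, h⟩
      exact (Finset.mem_erase.1 (h hiQ)).1 rfl
    rw [if_neg hiT', if_neg hiS']
    rcases eq_or_lt_of_le hcard with hc | hc
    · have hEq : S ∩ W = T ∩ W := Finset.eq_of_subset_of_card_le hmono (le_of_eq hc.symm)
      have hiff : (a ∈ S ∧ b ∈ S ∧ Q ⊆ S) ↔ (a ∈ T ∧ b ∈ T ∧ Q ⊆ T) := by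
        have hback : ∀ z, z ∈ W → z ∈ T → z ∈ S := by
          intro z hzW hzT
          have : z ∈ T ∩ W := Finset.mem_inter.2 ⟨hzT, hzW⟩
          rw [← hEq] at this
          exact (Finset.mem_inter.1 this).1
        constructor
        · rintro ⟨h1, h2, h3⟩
          exact ⟨hsub h1, hsub h2, h3.trans hsub⟩
        · rintro ⟨h1, h2, h3⟩
          refine ⟨hback a (Finset.mem_insert_self _ _) h1,
            hback b (by rw [hWdef]; exact Finset.mem_insert_of_mem (Finset.mem_insert_self _ _)) h2,
            fun x hx => hback x (by rw [hWdef]; exact Finset.mem_insert_of_mem (Finset.mem_insert_of_mem hx)) (h3 hx)⟩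
      have hind : (if a ∈ S ∧ b ∈ S ∧ Q ⊆ S then (1:ℝ) else 0) =
          (if a ∈ T ∧ b ∈ T ∧ Q ⊆ T then 1 else 0) := by
        apply if_congr hiff rfl rfl
      rw [hc, hind]
      linarith
    · have hx : ((S ∩ W).card : ℝ) + 1 ≤ ((T ∩ W).card : ℝ) := by exact_mod_cast hc
      have hindT1 : (if a ∈ T ∧ b ∈ T ∧ Q ⊆ T then (1:ℝ) else 0) ≤ 1 := by split <;> norm_num
      have hindS0 : (0:ℝ) ≤ (if a ∈ S ∧ b ∈ S ∧ Q ⊆ S then 1 else 0) := by split <;> norm_num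
      linarith [choose2_diff h1T, choose2_diff h1S, hindT1, hindS0, hx]
  · by_cases hia : i = a
    · have hpi : p i < K := by rw [hia]; exact hpa
      have hTQ : ∀ x ∈ Q, x ∉ T := by
        intro x hx hxT
        have h1 := Finset.le_sup (f := p) hxT
        rw [hQp x hx, ← hw.2] at h1
        omega
      have hval : ∀ X : Finset α, X ⊆ T →
          ((X ∩ W).card.choose 2 : ℝ) - (if a ∈ X ∧ b ∈ X ∧ Q ⊆ X then 1 else 0) =
          (if a ∈ X ∧ b ∈ X then 1 else 0) := by
        intro X hX
        have hindz : ¬ (a ∈ X ∧ b ∈ X ∧ Q ⊆ X) := by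
          rintro ⟨-, -, h⟩
          exact hTQ (q 0) hq0Q (hX (h hq0Q))
        rw [if_neg hindz, sub_zero]
        have hXW : X ∩ W ⊆ {a, b} := by
          intro z hz
          rw [Finset.mem_inter, hWdef, Finset.mem_insert, Finset.mem_insert] at hz
          rcases hz.2 with h | h | h
          · simp [h]
          · simp [h]
          · exact absurd (hX hz.1) (hTQ z h)
        by_cases haX : a ∈ X
        · by_cases hbX : b ∈ X
          · have : X ∩ W = {a, b} := by
              apply Finset.Subset.antisymm hXW
              intro z hz
              rw [Finset.mem_insert, Finset.mem_singleton] at hz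
              rcases hz with rfl | rfl
              · exact Finset.mem_inter.2 ⟨haX, Finset.mem_insert_self _ _⟩
              · exact Finset.mem_inter.2 ⟨hbX, by rw [hWdef]; exact Finset.mem_insert_of_mem (Finset.mem_insert_self _ _)⟩
            rw [this, if_pos ⟨haX, hbX⟩]
            rw [Finset.card_insert_of_notMem (by simp [hab]), Finset.card_singleton]
            norm_num
          · have hXW1 : X ∩ W ⊆ {a} := by
              intro z hz
              have h2 := hXW hz
              rw [Finset.mem_insert, Finset.mem_singleton] at h2
              rcases h2 with rfl | rfl
              · exact Finset.mem_singleton_self _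
              · exact absurd (Finset.mem_inter.1 hz).1 hbX
            have : (X ∩ W).card ≤ 1 := le_trans (Finset.card_le_card hXW1) (by simp)
            rw [Nat.choose_eq_zero_of_lt (by omega), if_neg (by tauto)]
            norm_num
        · have hXW1 : X ∩ W ⊆ {b} := by
            intro z hz
            have h2 := hXW hz
            rw [Finset.mem_insert, Finset.mem_singleton] at h2
            rcases h2 with rfl | rfl
            · exact absurd (Finset.mem_inter.1 hz).1 haX
            · exact Finset.mem_singleton_self _
          have : (X ∩ W).card ≤ 1 := le_trans (Finset.card_le_card hXW1) (by simp)
          rw [Nat.choose_eq_zero_of_lt (by omega), if_neg (by tauto)]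
          norm_num
      rw [hval T subset_rfl, hval S hsub, hval (T.erase i) (Finset.erase_subset _ _),
        hval (S.erase i) (le_trans (Finset.erase_subset _ _) hsub)]
      have haT : a ∈ T := hia ▸ hw.1
      have haS : a ∈ S := hia ▸ hiS
      have haT' : a ∉ T.erase i := fun h => (Finset.mem_erase.1 h).1 hia.symm
      have haS' : a ∉ S.erase i := fun h => (Finset.mem_erase.1 h).1 hia.symm
      rw [if_neg (show ¬(a ∈ T.erase i ∧ b ∈ T.erase i) from fun h => haT' h.1),
        if_neg (show ¬(a ∈ S.erase i ∧ b ∈ S.erase i) from fun h => haS' h.1)]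
      by_cases hbS : b ∈ S
      · rw [if_pos ⟨haT, hsub hbS⟩, if_pos ⟨haS, hbS⟩]
        norm_num
      · rw [if_neg (show ¬(a ∈ S ∧ b ∈ S) from fun h => hbS h.2)]
        split <;> norm_num
    · by_cases hib : i = b
      · have hpi : p i < K := by rw [hib]; exact hpb
        have hTQ : ∀ x ∈ Q, x ∉ T := by
          intro x hx hxT
          have h1 := Finset.le_sup (f := p) hxT
          rw [hQp x hx, ← hw.2] at h1
          omega
        have hval : ∀ X : Finset α, X ⊆ T →
            ((X ∩ W).card.choose 2 : ℝ) - (if a ∈ X ∧ b ∈ X ∧ Q ⊆ X then 1 else 0) =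
            (if a ∈ X ∧ b ∈ X then 1 else 0) := by
          intro X hX
          have hindz : ¬ (a ∈ X ∧ b ∈ X ∧ Q ⊆ X) := by
            rintro ⟨-, -, h⟩
            exact hTQ (q 0) hq0Q (hX (h hq0Q))
          rw [if_neg hindz, sub_zero]
          have hXW : X ∩ W ⊆ {a, b} := by
            intro z hz
            rw [Finset.mem_inter, hWdef, Finset.mem_insert, Finset.mem_insert] at hz
            rcases hz.2 with h | h | h
            · simp [h]
            · simp [h]
            · exact absurd (hX hz.1) (hTQ z h)
          by_cases haX : a ∈ X
          · by_cases hbX : b ∈ X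
            · have : X ∩ W = {a, b} := by
                apply Finset.Subset.antisymm hXW
                intro z hz
                rw [Finset.mem_insert, Finset.mem_singleton] at hz
                rcases hz with rfl | rfl
                · exact Finset.mem_inter.2 ⟨haX, Finset.mem_insert_self _ _⟩
                · exact Finset.mem_inter.2 ⟨hbX, by rw [hWdef]; exact Finset.mem_insert_of_mem (Finset.mem_insert_self _ _)⟩
              rw [this, if_pos ⟨haX, hbX⟩]
              rw [Finset.card_insert_of_notMem (by simp [hab]), Finset.card_singleton]
              norm_num
            · have hXW1 : X ∩ W ⊆ {a} := by
                intro z hz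
                have h2 := hXW hz
                rw [Finset.mem_insert, Finset.mem_singleton] at h2
                rcases h2 with rfl | rfl
                · exact Finset.mem_singleton_self _
                · exact absurd (Finset.mem_inter.1 hz).1 hbX
              have : (X ∩ W).card ≤ 1 := le_trans (Finset.card_le_card hXW1) (by simp)
              rw [Nat.choose_eq_zero_of_lt (by omega), if_neg (by tauto)]
              norm_num
          · have hXW1 : X ∩ W ⊆ {b} := by
              intro z hz
              have h2 := hXW hz
              rw [Finset.mem_insert, Finset.mem_singleton] at h2
              rcases h2 with rfl | rfl
              · exact absurd (Finset.mem_inter.1 hz).1 haX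
              · exact Finset.mem_singleton_self _
            have : (X ∩ W).card ≤ 1 := le_trans (Finset.card_le_card hXW1) (by simp)
            rw [Nat.choose_eq_zero_of_lt (by omega), if_neg (by tauto)]
            norm_num
        rw [hval T subset_rfl, hval S hsub, hval (T.erase i) (Finset.erase_subset _ _),
          hval (S.erase i) (le_trans (Finset.erase_subset _ _) hsub)]
        have hbT : b ∈ T := hib ▸ hw.1
        have hbS : b ∈ S := hib ▸ hiS
        have hbT' : b ∉ T.erase i := fun h => (Finset.mem_erase.1 h).1 hib.symm
        have hbS' : b ∉ S.erase i := fun h => (Finset.mem_erase.1 h).1 hib.symm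
        rw [if_neg (show ¬(a ∈ T.erase i ∧ b ∈ T.erase i) from fun h => hbT' h.2),
          if_neg (show ¬(a ∈ S.erase i ∧ b ∈ S.erase i) from fun h => hbS' h.2)]
        by_cases haS : a ∈ S
        · rw [if_pos ⟨hsub haS, hbT⟩, if_pos ⟨haS, hbS⟩]
          norm_num
        · rw [if_neg (show ¬(a ∈ S ∧ b ∈ S) from fun h => haS h.1)]
          split <;> norm_num
      · -- i outside W
        have hiW : i ∉ W := by
          rw [hWdef, Finset.mem_insert, Finset.mem_insert]
          rintro (h | h | h)
          · exact hia h
          · exact hib h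
          · exact hiQ h
        have hkey : ∀ X : Finset α,
            ((X.erase i ∩ W).card.choose 2 : ℝ) -
            (if a ∈ X.erase i ∧ b ∈ X.erase i ∧ Q ⊆ X.erase i then 1 else 0) =
            ((X ∩ W).card.choose 2 : ℝ) -
            (if a ∈ X ∧ b ∈ X ∧ Q ⊆ X then 1 else 0) := by
          intro X
          have h1 : X.erase i ∩ W = X ∩ W := by
            ext z
            simp only [Finset.mem_inter, Finset.mem_erase]
            constructor
            · rintro ⟨⟨-, h⟩, h2⟩; exact ⟨h, h2⟩
            · rintro ⟨h, h2⟩; exact ⟨⟨fun hz => hiW (hz ▸ h2), h⟩, h2⟩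
          have h3 : (a ∈ X.erase i) ↔ (a ∈ X) := by
            simp only [Finset.mem_erase, and_iff_right_iff_imp]
            exact fun _ hai => hia hai.symm
          have h4 : (b ∈ X.erase i) ↔ (b ∈ X) := by
            simp only [Finset.mem_erase, and_iff_right_iff_imp]
            exact fun _ hbi => hib hbi.symm
          have h5 : (Q ⊆ X.erase i) ↔ (Q ⊆ X) := by
            constructor
            · exact fun h => h.trans (Finset.erase_subset _ _)
            · intro h x hx
              exact Finset.mem_erase.2 ⟨fun hz => hiQ (hz ▸ hx), h hx⟩
          rw [h1]
          congr 1
          apply if_congr _ rfl rfl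
          rw [h3, h4, h5]
        rw [hkey T, hkey S]
        linarith


end
section
variable [Fintype α] [DecidableEq α]

lemma path_contradiction (G : SimpleGraph α) (ω : α → ℝ) (hω : ∀ i, 0 < ω i)
    (p : α → ℕ) (K : ℕ) (a b : α) (q : ℕ → α) (m : ℕ) (hm : 1 ≤ m)
    (hpa : p a < K) (hpb : p b < K) (hpq : ∀ j ≤ m, p (q j) = K)
    (hinj : ∀ i ≤ m, ∀ j ≤ m, q i = q j → i = j)
    (hstep : ∀ i < m, G.Adj (q i) (q (i+1)))
    (hchord : ∀ i j, i + 1 < j → j ≤ m → ¬ G.Adj (q i) (q j))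
    (ha0 : G.Adj a (q 0)) (hbm : G.Adj b (q m))
    (haq : ∀ j ≤ m, G.Adj a (q j) → j = 0)
    (hbq : ∀ j ≤ m, G.Adj b (q j) → j = m)
    (hab : a ≠ b)
    (hpres : Preserves G ω p) : False := by
  classical
  set Q : Finset α := (Finset.range (m+1)).image q with hQdef
  set P : Finset α := insert a Q with hPdef
  set W : Finset α := insert a (insert b Q) with hWdef
  have hqQ : ∀ j ≤ m, q j ∈ Q := fun j hj =>
    Finset.mem_image.2 ⟨j, Finset.mem_range.2 (by omega), rfl⟩
  have hmemQ : ∀ x, x ∈ Q ↔ ∃ t, t ≤ m ∧ q t = x := by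
    intro x
    simp only [hQdef, Finset.mem_image, Finset.mem_range, Nat.lt_succ_iff]
  have hqa : ∀ t ≤ m, q t ≠ a := by
    intro t ht h
    have := hpq t ht
    rw [h] at this
    omega
  have hqb : ∀ t ≤ m, q t ≠ b := by
    intro t ht h
    have := hpq t ht
    rw [h] at this
    omega
  have haQ : a ∉ Q := by
    rw [hmemQ]
    rintro ⟨t, ht, h⟩
    exact hqa t ht h
  have hbQ : b ∉ Q := by
    rw [hmemQ]
    rintro ⟨t, ht, h⟩
    exact hqb t ht h
  have hmemW : ∀ x, x ∈ W ↔ x = a ∨ x = b ∨ ∃ t, t ≤ m ∧ q t = x := by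
    intro x
    rw [hWdef, Finset.mem_insert, Finset.mem_insert, hmemQ]
  have haW : a ∈ W := Finset.mem_insert_self _ _
  have hbW : b ∈ W := Finset.mem_insert_of_mem (Finset.mem_insert_self _ _)
  have hqW : ∀ j ≤ m, q j ∈ W := fun j hj =>
    Finset.mem_insert_of_mem (Finset.mem_insert_of_mem (hqQ j hj))
  have hPW : P ⊆ W := by
    rw [hPdef, hWdef]
    intro x hx
    rcases Finset.mem_insert.1 hx with h | h
    · rw [h]; exact Finset.mem_insert_self _ _
    · exact Finset.mem_insert_of_mem (Finset.mem_insert_of_mem h)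
  have hbP : b ∉ P := by
    rw [hPdef, Finset.mem_insert]
    rintro (h | h)
    · exact hab h.symm
    · exact hbQ h
  have hWb : W.erase b = P := by
    ext x
    rw [Finset.mem_erase, hmemW, hPdef, Finset.mem_insert, hmemQ]
    constructor
    · rintro ⟨hxb, h | h | h⟩
      · exact Or.inl h
      · exact absurd h hxb
      · exact Or.inr h
    · rintro (h | h)
      · exact ⟨h ▸ hab, Or.inl h⟩
      · obtain ⟨t, ht, rfl⟩ := h
        exact ⟨hqb t ht, Or.inr (Or.inr ⟨t, ht, rfl⟩)⟩
  have hsupW : W.sup p = K := by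
    apply le_antisymm
    · apply Finset.sup_le
      intro x hx
      rcases (hmemW x).1 hx with h | h | ⟨t, ht, h⟩
      · rw [h]; omega
      · rw [h]; omega
      · rw [← h, hpq t ht]
    · have h1 := Finset.le_sup (f := p) (hqW 0 (by omega))
      rwa [hpq 0 (by omega)] at h1
  -- the two families of pieces
  set A : ℕ → Finset α := fun j => insert a ((Finset.range j).image q) with hAdef
  set Bq : ℕ → Finset α := fun j => (Finset.Icc (j+1) m).image q with hBqdef
  set B : ℕ → Finset α := fun j => insert b (Bq j) with hBdef
  have hmemA : ∀ j x, x ∈ A j ↔ x = a ∨ ∃ t, t < j ∧ q t = x := by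
    intro j x
    simp only [hAdef, Finset.mem_insert, Finset.mem_image, Finset.mem_range]
  have hmemBq : ∀ j x, x ∈ Bq j ↔ ∃ t, j + 1 ≤ t ∧ t ≤ m ∧ q t = x := by
    intro j x
    simp only [hBqdef, Finset.mem_image, Finset.mem_Icc]
    constructor
    · rintro ⟨t, ⟨h1, h2⟩, h3⟩; exact ⟨t, h1, h2, h3⟩
    · rintro ⟨t, h1, h2, h3⟩; exact ⟨t, ⟨h1, h2⟩, h3⟩
  have hmemB : ∀ j x, x ∈ B j ↔ x = b ∨ ∃ t, j + 1 ≤ t ∧ t ≤ m ∧ q t = x := by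
    intro j x
    rw [hBdef]
    simp only [Finset.mem_insert]
    rw [hmemBq]
  -- splittings
  have hsplit1 : ∀ j ≤ m, W.erase (q j) = A j ∪ B j := by
    intro j hj
    ext x
    rw [Finset.mem_erase, hmemW, Finset.mem_union, hmemA, hmemB]
    constructor
    · rintro ⟨hx, h | h | ⟨t, ht, rfl⟩⟩
      · exact Or.inl (Or.inl h)
      · exact Or.inr (Or.inl h)
      · have htj : t ≠ j := fun h => hx (by rw [h])
        rcases Nat.lt_or_ge t j with h' | h'
        · exact Or.inl (Or.inr ⟨t, h', rfl⟩)
        · exact Or.inr (Or.inr ⟨t, by omega, ht, rfl⟩)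
    · rintro ((h | ⟨t, ht, rfl⟩) | (h | ⟨t, ht1, ht2, rfl⟩))
      · exact ⟨h ▸ (fun hc => hqa j hj hc.symm), Or.inl h⟩
      · refine ⟨fun hc => ?_, Or.inr (Or.inr ⟨t, by omega, rfl⟩)⟩
        have := hinj j hj t (by omega) hc.symm
        omega
      · exact ⟨h ▸ (fun hc => hqb j hj hc.symm), Or.inr (Or.inl h)⟩
      · refine ⟨fun hc => ?_, Or.inr (Or.inr ⟨t, by omega, rfl⟩)⟩
        have := hinj j hj t (by omega) hc.symm
        omega
  have hsplit2 : ∀ j ≤ m, P.erase (q j) = A j ∪ Bq j := by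
    intro j hj
    ext x
    rw [Finset.mem_erase, hPdef, Finset.mem_insert, hmemQ, Finset.mem_union, hmemA, hmemBq]
    constructor
    · rintro ⟨hx, h | ⟨t, ht, rfl⟩⟩
      · exact Or.inl (Or.inl h)
      · have htj : t ≠ j := fun h => hx (by rw [h])
        rcases Nat.lt_or_ge t j with h' | h'
        · exact Or.inl (Or.inr ⟨t, h', rfl⟩)
        · exact Or.inr ⟨t, by omega, ht, rfl⟩
    · rintro ((h | ⟨t, ht, rfl⟩) | ⟨t, ht1, ht2, rfl⟩)
      · exact ⟨h ▸ (fun hc => hqa j hj hc.symm), Or.inl h⟩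
      · refine ⟨fun hc => ?_, Or.inr ⟨t, by omega, rfl⟩⟩
        have := hinj j hj t (by omega) hc.symm
        omega
      · refine ⟨fun hc => ?_, Or.inr ⟨t, ht2, rfl⟩⟩
        have := hinj j hj t (by omega) hc.symm
        omega
  -- disjointness and cross-edge facts
  have hdisj2 : ∀ j, Disjoint (A j) (Bq j) := by
    intro j
    rw [Finset.disjoint_left]
    intro x hx hx'
    rw [hmemA] at hx
    rw [hmemBq] at hx'
    obtain ⟨t, ht1, ht2, rfl⟩ := hx'
    rcases hx with h | ⟨s, hs, h⟩
    · exact hqa t ht2 h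
    · have := hinj t ht2 s (by omega) h.symm
      omega
  have hdisj1 : ∀ j ≤ m, Disjoint (A j) (B j) := by
    intro j hj
    rw [Finset.disjoint_left]
    intro x hx hx'
    rw [hmemA] at hx
    rw [hmemB] at hx'
    rcases hx' with rfl | hx'
    · rcases hx with h | ⟨s, hs, h⟩
      · exact hab h.symm
      · exact hqb s (by omega) h
    · obtain ⟨t, ht1, ht2, rfl⟩ := hx'
      rcases hx with h | ⟨s, hs, h⟩
      · exact hqa t ht2 h
      · have := hinj t ht2 s (by omega) h.symm
        omega
  have hcross2 : ∀ j ≤ m, ∀ x ∈ A j, ∀ y ∈ Bq j, ¬ G.Adj x y := by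
    intro j hj x hx y hy hadj
    rw [hmemA] at hx
    rw [hmemBq] at hy
    obtain ⟨t, ht1, ht2, rfl⟩ := hy
    rcases hx with rfl | ⟨s, hs, rfl⟩
    · have := haq t ht2 hadj
      omega
    · exact hchord s t (by omega) ht2 hadj
  -- cardinalities
  have hinjOn : ∀ (s : Finset ℕ), (∀ x ∈ s, x ≤ m) → (s.image q).card = s.card := by
    intro s hs
    apply Finset.card_image_of_injOn
    intro i hi j hj hij
    exact hinj i (hs i hi) j (hs j hj) hij
  have hcardQ : Q.card = m + 1 := by
    rw [hQdef, hinjOn _ (fun x hx => by simpa [Nat.lt_succ_iff] using Finset.mem_range.1 hx),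
      Finset.card_range]
  have hcardP : P.card = m + 2 := by
    rw [hPdef, Finset.card_insert_of_notMem haQ, hcardQ]
  have hcardA : ∀ j ≤ m, (A j).card = j + 1 := by
    intro j hj
    rw [hAdef]
    simp only
    rw [Finset.card_insert_of_notMem, hinjOn _ (fun x hx => by
      have := Finset.mem_range.1 hx; omega), Finset.card_range]
    intro h
    obtain ⟨t, ht, h⟩ := Finset.mem_image.1 h
    exact hqa t (by have := Finset.mem_range.1 ht; omega) h
  have hcardBq : ∀ j, (Bq j).card = m - j := by
    intro j
    rw [hBqdef]
    simp only
    rw [hinjOn _ (fun x hx => (Finset.mem_Icc.1 hx).2), Nat.card_Icc]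
    omega
  -- subset facts for value computations
  have hAP : ∀ j ≤ m, A j ⊆ P := by
    intro j hj x hx
    rcases (hmemA j x).1 hx with h | ⟨t, ht, h⟩
    · rw [hPdef]; exact h ▸ Finset.mem_insert_self _ _
    · rw [hPdef]; exact Finset.mem_insert_of_mem (h ▸ hqQ t (by omega))
  have hBqQ : ∀ j, Bq j ⊆ Q := by
    intro j x hx
    obtain ⟨t, ht1, ht2, rfl⟩ := (hmemBq j x).1 hx
    exact hqQ t ht2
  have hBqP : ∀ j, Bq j ⊆ P := fun j => (hBqQ j).trans (by rw [hPdef]; exact Finset.subset_insert _ _)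
  have haBq : ∀ j, a ∉ Bq j := fun j h => by
    obtain ⟨t, ht1, ht2, hh⟩ := (hmemBq j a).1 h
    exact hqa t ht2 hh
  have hbA : ∀ j ≤ m, b ∉ A j := fun j hj h => by
    rcases (hmemA j b).1 h with hh | ⟨t, ht, hh⟩
    · exact hab hh.symm
    · exact hqb t (by omega) hh
  -- connectivity of the pieces
  have hconnW : Conn G W := by
    apply conn_of_path (fun i => if i = 0 then a else if i ≤ m + 1 then q (i-1) else b) (m+2)
    · symm
      ext x
      simp only [Finset.mem_image, Finset.mem_range]
      rw [hmemW]
      constructor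
      · rintro ⟨i, hi, rfl⟩
        by_cases h0 : i = 0
        · simp [h0]
        · by_cases h1 : i ≤ m + 1
          · rw [if_neg h0, if_pos h1]
            exact Or.inr (Or.inr ⟨i - 1, by omega, rfl⟩)
          · rw [if_neg h0, if_neg h1]
            exact Or.inr (Or.inl rfl)
      · rintro (rfl | rfl | ⟨t, ht, rfl⟩)
        · exact ⟨0, by omega, by simp⟩
        · exact ⟨m + 2, by omega, by rw [if_neg (by omega), if_neg (by omega)]⟩
        · refine ⟨t + 1, by omega, ?_⟩
          rw [if_neg (by omega), if_pos (by omega)]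
          simp
    · intro i hi
      by_cases h0 : i = 0
      · subst h0
        rw [if_pos rfl, if_neg (by omega), if_pos (by omega)]
        exact ha0
      · by_cases h1 : i ≤ m
        · rw [if_neg h0, if_pos (by omega), if_neg (by omega), if_pos (by omega)]
          have he : i - 1 + 1 = i := by omega
          have := hstep (i-1) (by omega)
          rwa [he] at this
        · have h2 : i = m + 1 := by omega
          subst h2
          rw [if_neg h0, if_pos (by omega), if_neg (by omega), if_neg (by omega)]
          have he : m + 1 - 1 = m := by omega
          rw [he]
          exact hbm.symm
  have hconnP : Conn G P := by
    apply conn_of_path (fun i => if i = 0 then a else q (i-1)) (m+1)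
    · symm
      ext x
      simp only [Finset.mem_image, Finset.mem_range]
      rw [hPdef, Finset.mem_insert, hmemQ]
      constructor
      · rintro ⟨i, hi, rfl⟩
        by_cases h0 : i = 0
        · simp [h0]
        · rw [if_neg h0]
          exact Or.inr ⟨i - 1, by omega, rfl⟩
      · rintro (rfl | ⟨t, ht, rfl⟩)
        · exact ⟨0, by omega, by simp⟩
        · refine ⟨t + 1, by omega, ?_⟩
          rw [if_neg (by omega)]
          simp
    · intro i hi
      by_cases h0 : i = 0
      · subst h0
        rw [if_pos rfl, if_neg (by omega)]
        exact ha0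
      · rw [if_neg h0, if_neg (by omega)]
        have he : i - 1 + 1 = i := by omega
        have := hstep (i-1) (by omega)
        rwa [he] at this
  have hconnA : ∀ j ≤ m, Conn G (A j) := by
    intro j hj
    apply conn_of_path (fun i => if i = 0 then a else q (i-1)) j
    · symm
      ext x
      simp only [Finset.mem_image, Finset.mem_range]
      rw [hmemA]
      constructor
      · rintro ⟨i, hi, rfl⟩
        by_cases h0 : i = 0
        · simp [h0]
        · rw [if_neg h0]
          exact Or.inr ⟨i - 1, by omega, rfl⟩
      · rintro (rfl | ⟨t, ht, rfl⟩)
        · exact ⟨0, by omega, by simp⟩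
        · refine ⟨t + 1, by omega, ?_⟩
          rw [if_neg (by omega)]
          simp
    · intro i hi
      by_cases h0 : i = 0
      · subst h0
        rw [if_pos rfl, if_neg (by omega)]
        exact ha0
      · rw [if_neg h0, if_neg (by omega)]
        have he : i - 1 + 1 = i := by omega
        have := hstep (i-1) (by omega)
        rwa [he] at this
  have hconnBq : ∀ j, j < m → Conn G (Bq j) := by
    intro j hj
    apply conn_of_path (fun i => q (j+1+i)) (m - j - 1)
    · symm
      ext x
      simp only [Finset.mem_image, Finset.mem_range]
      rw [hmemBq]
      constructor
      · rintro ⟨i, hi, rfl⟩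
        exact ⟨j + 1 + i, by omega, by omega, rfl⟩
      · rintro ⟨t, ht1, ht2, rfl⟩
        exact ⟨t - j - 1, by omega, by rw [show j + 1 + (t - j - 1) = t by omega]⟩
    · intro i hi
      have := hstep (j+1+i) (by omega)
      rwa [show j + 1 + i + 1 = j + 1 + (i+1) by omega] at this
  have hconnB : ∀ j ≤ m, Conn G (B j) := by
    intro j hj
    apply conn_of_path (fun i => if i = 0 then b else q (m+1-i)) (m - j)
    · symm
      ext x
      simp only [Finset.mem_image, Finset.mem_range]
      rw [hmemB]
      constructor
      · rintro ⟨i, hi, rfl⟩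
        by_cases h0 : i = 0
        · simp [h0]
        · rw [if_neg h0]
          exact Or.inr ⟨m + 1 - i, by omega, by omega, rfl⟩
      · rintro (rfl | ⟨t, ht1, ht2, rfl⟩)
        · exact ⟨0, by omega, by simp⟩
        · refine ⟨m + 1 - t, by omega, ?_⟩
          rw [if_neg (by omega), show m + 1 - (m + 1 - t) = t by omega]
    · intro i hi
      by_cases h0 : i = 0
      · subst h0
        rw [if_pos rfl, if_neg (by omega), show m + 1 - 1 = m by omega]
        exact hbm
      · rw [if_neg h0, if_neg (by omega)]
        have := (hstep (m - i) (by omega)).symm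
        rw [show m - i + 1 = m + 1 - i by omega] at this
        rwa [show m + 1 - (i+1) = m - i by omega]
  -- nonemptiness
  have hAne : ∀ j, (A j).Nonempty := fun j => ⟨a, Finset.mem_insert_self _ _⟩
  have hBne : ∀ j, (B j).Nonempty := fun j => ⟨b, Finset.mem_insert_self _ _⟩
  have hBqne : ∀ j, j < m → (Bq j).Nonempty := fun j hj =>
    ⟨q (j+1), (hmemBq _ _).2 ⟨j+1, le_refl _, by omega, rfl⟩⟩
  have hBqm : Bq m = ∅ := by
    rw [Finset.eq_empty_iff_forall_notMem]
    intro x hx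
    obtain ⟨t, ht1, ht2, rfl⟩ := (hmemBq m x).1 hx
    omega
  have hq0Wb : q 0 ∈ W.erase b := by
    rw [hWb, hPdef]
    exact Finset.mem_insert_of_mem (hqQ 0 (by omega))
  have hWbW : W.erase b ⊂ W := Finset.erase_ssubset hbW
  have hwbar_q : ∀ j ≤ m, wbar ω p W (q j) = ω (q j) := by
    intro j hj
    rw [wbar, if_pos ⟨hqW j hj, by rw [hpq j hj, hsupW]⟩]
  have hwbar_a : wbar ω p W a = 0 := by
    rw [wbar, if_neg]
    rintro ⟨-, h⟩
    rw [hsupW] at h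
    omega
  by_cases hadj : G.Adj a b
  · -- edge between a and b : use the game v₄
    have hQW : Q ⊆ W := by
      rw [hWdef]
      intro x hx
      exact Finset.mem_insert_of_mem (Finset.mem_insert_of_mem hx)
    have hcardW : W.card = m + 3 := by
      rw [hWdef, Finset.card_insert_of_notMem, Finset.card_insert_of_notMem hbQ, hcardQ]
      rw [Finset.mem_insert]
      rintro (h | h)
      · exact hab h
      · exact haQ h
    have hconnWj : ∀ j ≤ m, Conn G (W.erase (q j)) := by
      intro j hj
      apply conn_of_path (fun i => if i < m - j then q (j+1+i) else if i = m - j then b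
        else if i = m - j + 1 then a else q (i - (m - j + 2))) (m+1)
      · symm
        ext x
        simp only [Finset.mem_image, Finset.mem_range]
        rw [Finset.mem_erase, hmemW]
        constructor
        · rintro ⟨i, hi, rfl⟩
          by_cases c1 : i < m - j
          · rw [if_pos c1]
            refine ⟨fun hc => ?_, Or.inr (Or.inr ⟨j+1+i, by omega, rfl⟩)⟩
            have := hinj (j+1+i) (by omega) j (by omega) hc
            omega
          · by_cases c2 : i = m - j
            · rw [if_neg c1, if_pos c2]
              exact ⟨fun hc => hqb j hj hc.symm, Or.inr (Or.inl rfl)⟩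
            · by_cases c3 : i = m - j + 1
              · rw [if_neg c1, if_neg c2, if_pos c3]
                exact ⟨fun hc => hqa j hj hc.symm, Or.inl rfl⟩
              · rw [if_neg c1, if_neg c2, if_neg c3]
                refine ⟨fun hc => ?_, Or.inr (Or.inr ⟨i - (m - j + 2), by omega, rfl⟩)⟩
                have := hinj (i - (m - j + 2)) (by omega) j (by omega) hc
                omega
        · rintro ⟨hxq, rfl | rfl | ⟨t, ht, rfl⟩⟩
          · refine ⟨m - j + 1, by omega, ?_⟩
            rw [if_neg (by omega), if_neg (by omega), if_pos rfl]
          · refine ⟨m - j, by omega, ?_⟩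
            rw [if_neg (by omega), if_pos rfl]
          · have htj : t ≠ j := fun hc => hxq (by rw [hc])
            rcases Nat.lt_or_ge j t with h' | h'
            · refine ⟨t - j - 1, by omega, ?_⟩
              rw [if_pos (by omega), show j + 1 + (t - j - 1) = t by omega]
            · refine ⟨m - j + 2 + t, by omega, ?_⟩
              rw [if_neg (by omega), if_neg (by omega), if_neg (by omega),
                show m - j + 2 + t - (m - j + 2) = t by omega]
      · intro i hi
        by_cases c1 : i + 1 < m - j
        · rw [if_pos (by omega), if_pos c1]
          have := hstep (j+1+i) (by omega)
          rwa [show j + 1 + i + 1 = j + 1 + (i+1) by omega] at this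
        · by_cases c2 : i + 1 = m - j
          · rw [if_pos (by omega), if_neg (by omega), if_pos c2]
            have : j + 1 + i = m := by omega
            rw [this]
            exact hbm.symm
          · by_cases c3 : i = m - j
            · rw [if_neg (by omega), if_pos c3, if_neg (by omega), if_neg (by omega),
                if_pos (by omega)]
              exact hadj.symm
            · by_cases c4 : i = m - j + 1
              · rw [if_neg (by omega), if_neg (by omega), if_pos c4, if_neg (by omega),
                  if_neg (by omega), if_neg (by omega), show i + 1 - (m - j + 2) = 0 by omega]
                exact ha0
              · rw [if_neg (by omega), if_neg (by omega), if_neg (by omega),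
                  if_neg (by omega), if_neg (by omega), if_neg (by omega)]
                have := hstep (i - (m - j + 2)) (by omega)
                rwa [show i - (m - j + 2) + 1 = i + 1 - (m - j + 2) by omega] at this
    set v : Finset α → ℝ := fun X => ((X ∩ W).card.choose 2 : ℝ) -
      (if a ∈ X ∧ b ∈ X ∧ Q ⊆ X then 1 else 0) with hvdef
    have hv0 : v ∅ = 0 := by
      simp only [hvdef]
      rw [Finset.empty_inter, if_neg]
      · simp
      · rintro ⟨h, -⟩
        exact absurd h (Finset.notMem_empty a)
    have hconv : WConvex ω p v := wconv_v4 ω hω p K a b q m hpa hpb hpq hab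
    have hvW : v W = (((m+3).choose 2 : ℕ) : ℝ) - 1 := by
      simp only [hvdef]
      rw [Finset.inter_self, hcardW, if_pos ⟨haW, hbW, hQW⟩]
    have hvP : v P = (((m+2).choose 2 : ℕ) : ℝ) := by
      simp only [hvdef]
      rw [Finset.inter_eq_left.2 hPW, hcardP, if_neg]
      · ring
      · rintro ⟨-, h, -⟩; exact hbP h
    have hvA : ∀ j ≤ m, v (A j) = (((j+1).choose 2 : ℕ) : ℝ) := by
      intro j hj
      simp only [hvdef]
      rw [Finset.inter_eq_left.2 ((hAP j hj).trans hPW), hcardA j hj, if_neg]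
      · ring
      · rintro ⟨-, h, -⟩; exact hbA j hj h
    have hvBq : ∀ j, v (Bq j) = (((m-j).choose 2 : ℕ) : ℝ) := by
      intro j
      simp only [hvdef]
      rw [Finset.inter_eq_left.2 ((hBqP j).trans hPW), hcardBq j, if_neg]
      · ring
      · rintro ⟨h, -, -⟩; exact haBq j h
    have hvWj : ∀ j ≤ m, v (W.erase (q j)) = (((m+2).choose 2 : ℕ) : ℝ) := by
      intro j hj
      simp only [hvdef]
      rw [Finset.inter_eq_left.2 (Finset.erase_subset _ _),
        Finset.card_erase_of_mem (hqW j hj), hcardW, if_neg]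
      · norm_num
      · rintro ⟨-, -, h⟩
        exact (Finset.mem_erase.1 (h (hqQ j hj))).1 rfl
    have cgW : commGame G v W = v W := commGame_of_conn ⟨a, haW⟩ hconnW v
    have cgWb : commGame G v (W.erase b) = v P := by
      rw [hWb]
      exact commGame_of_conn ⟨a, Finset.mem_insert_self _ _⟩ hconnP v
    have cgWj : ∀ j ≤ m, commGame G v (W.erase (q j)) = v (W.erase (q j)) := by
      intro j hj
      exact commGame_of_conn ⟨a, Finset.mem_erase.2 ⟨fun h => hqa j hj h.symm, haW⟩⟩
        (hconnWj j hj) v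
    have cgPj : ∀ j ≤ m, commGame G v ((W.erase b).erase (q j)) = v (A j) + v (Bq j) := by
      intro j hj
      rw [hWb, hsplit2 j hj]
      by_cases hjm : j < m
      · exact commGame_pair (hconnA j hj) (hconnBq j hjm) (hAne j) (hBqne j hjm)
          (hdisj2 j) (hcross2 j hj) v
      · have hjeq : j = m := by omega
        rw [hjeq]
        rw [hBqm]
        rw [Finset.union_empty, commGame_of_conn (hAne m) (hconnA m le_rfl) v, hv0]
        ring
    have hcast1 : (((m+3).choose 2 : ℕ) : ℝ) = ((m:ℝ)+3) * ((m:ℝ)+2) / 2 := by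
      rw [Nat.cast_choose_two (K := ℝ)]
      push_cast
      ring
    have hcast2 : (((m+2).choose 2 : ℕ) : ℝ) = ((m:ℝ)+2) * ((m:ℝ)+1) / 2 := by
      rw [Nat.cast_choose_two (K := ℝ)]
      push_cast
      ring
    have hcast3 : ∀ j ≤ m, (((j+1).choose 2 : ℕ) : ℝ) = ((j:ℝ)+1) * (j:ℝ) / 2 := by
      intro j hj
      rw [Nat.cast_choose_two (K := ℝ)]
      push_cast
      ring
    have hcast4 : ∀ j ≤ m, (((m-j).choose 2 : ℕ) : ℝ) =
        ((m:ℝ)-(j:ℝ)) * ((m:ℝ)-(j:ℝ)-1) / 2 := by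
      intro j hj
      rw [Nat.cast_choose_two (K := ℝ)]
      rw [Nat.cast_sub hj]
    have hDj : ∀ j ≤ m, commGame G v W - commGame G v (W.erase (q j)) -
        commGame G v (W.erase b) + commGame G v ((W.erase b).erase (q j)) =
        -(((j:ℝ)+1) * ((m:ℝ)-(j:ℝ))) := by
      intro j hj
      rw [cgW, cgWb, cgWj j hj, cgPj j hj, hvW, hvP, hvA j hj, hvWj j hj, hvBq j,
        hcast1, hcast2, hcast3 j hj, hcast4 j hj]
      ring
    have hineq := hpres v hv0 hconv (W.erase b) W hWbW
    have hkey : ∑ i ∈ W.erase b, wbar ω p W i * (commGame G v W -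
        commGame G v (W.erase i) - commGame G v (W.erase b) +
        commGame G v ((W.erase b).erase i)) < 0 := by
      rw [← Finset.add_sum_erase _ _ hq0Wb]
      have h1 : wbar ω p W (q 0) * (commGame G v W - commGame G v (W.erase (q 0)) -
          commGame G v (W.erase b) + commGame G v ((W.erase b).erase (q 0))) =
          - (ω (q 0) * (m:ℝ)) := by
        rw [hwbar_q 0 (by omega), hDj 0 (by omega)]
        push_cast
        ring
      rw [h1]
      have h2 : ∑ i ∈ (W.erase b).erase (q 0), wbar ω p W i * (commGame G v W -
          commGame G v (W.erase i) - commGame G v (W.erase b) +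
          commGame G v ((W.erase b).erase i)) ≤ 0 := by
        apply Finset.sum_nonpos
        intro i hi
        have hi' := Finset.mem_of_mem_erase hi
        rw [Finset.mem_erase, hmemW] at hi'
        obtain ⟨hib, rfl | rfl | ⟨t, ht, rfl⟩⟩ := hi'
        · rw [hwbar_a, zero_mul]
        · exact absurd rfl hib
        · rw [hwbar_q t ht, hDj t ht]
          apply mul_nonpos_of_nonneg_of_nonpos (hω _).le
          have h3 : (0:ℝ) ≤ ((t:ℝ)+1) * ((m:ℝ)-(t:ℝ)) := by
            apply mul_nonneg
            · positivity
            · have : (t:ℝ) ≤ (m:ℝ) := by exact_mod_cast ht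
              linarith
          linarith
      have hm' : (1:ℝ) ≤ (m:ℝ) := by exact_mod_cast hm
      nlinarith [hω (q 0)]
    exact absurd hineq (not_le.2 hkey)

  · -- no edge between a and b : use the game v₁
    set v : Finset α → ℝ := fun X => ((X ∩ P).card.choose 2 : ℝ) +
      (if b ∈ X ∧ a ∉ X ∧ (X ∩ Q).Nonempty then 1 else 0) with hvdef
    have hv0 : v ∅ = 0 := by simp [hvdef]
    have hconv : WConvex ω p v := wconv_v1 ω hω p K a b q m hpa hpb hpq
    have hvW : v W = (((m+2).choose 2 : ℕ) : ℝ) := by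
      simp only [hvdef]
      rw [Finset.inter_eq_right.2 hPW, hcardP, if_neg]
      · ring
      · rintro ⟨-, h, -⟩; exact h haW
    have hvP : v P = (((m+2).choose 2 : ℕ) : ℝ) := by
      simp only [hvdef]
      rw [Finset.inter_self, hcardP, if_neg]
      · ring
      · rintro ⟨h, -, -⟩; exact hbP h
    have hvA : ∀ j ≤ m, v (A j) = (((j+1).choose 2 : ℕ) : ℝ) := by
      intro j hj
      simp only [hvdef]
      rw [Finset.inter_eq_left.2 (hAP j hj), hcardA j hj, if_neg]
      · ring
      · rintro ⟨h, -, -⟩; exact hbA j hj h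
    have hvBq : ∀ j, v (Bq j) = (((m-j).choose 2 : ℕ) : ℝ) := by
      intro j
      simp only [hvdef]
      rw [Finset.inter_eq_left.2 (hBqP j), hcardBq j, if_neg]
      · ring
      · rintro ⟨h, -, -⟩
        obtain ⟨t, ht1, ht2, hh⟩ := (hmemBq j b).1 h
        exact hqb t ht2 hh
    have hBP : ∀ j, B j ∩ P = Bq j := by
      intro j
      ext x
      rw [Finset.mem_inter, hmemB]
      constructor
      · rintro ⟨rfl | h, h2⟩
        · exact absurd h2 hbP
        · exact (hmemBq j x).2 h
      · intro h
        exact ⟨Or.inr ((hmemBq j x).1 h), hBqP j h⟩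
    have hvB : ∀ j ≤ m, v (B j) =
        (((m-j).choose 2 : ℕ) : ℝ) + (if j < m then (1:ℝ) else 0) := by
      intro j hj
      simp only [hvdef]
      rw [hBP j, hcardBq j]
      congr 1
      by_cases hjm : j < m
      · rw [if_pos hjm, if_pos]
        refine ⟨Finset.mem_insert_self _ _, ?_, ?_⟩
        · intro h
          rcases Finset.mem_insert.1 h with h | h
          · exact hab h
          · exact haBq j h
        · obtain ⟨x, hx⟩ := hBqne j hjm
          exact ⟨x, Finset.mem_inter.2 ⟨Finset.mem_insert_of_mem hx, hBqQ j hx⟩⟩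
      · rw [if_neg hjm, if_neg]
        rintro ⟨-, -, x, hx⟩
        rw [Finset.mem_inter] at hx
        have h1 : x ∈ Bq j := by
          rcases Finset.mem_insert.1 hx.1 with h | h
          · exact absurd (h ▸ hx.2) hbQ
          · exact h
        obtain ⟨t, ht1, ht2, rfl⟩ := (hmemBq j x).1 h1
        omega
    have cgW : commGame G v W = v W := commGame_of_conn ⟨a, haW⟩ hconnW v
    have cgWb : commGame G v (W.erase b) = v P := by
      rw [hWb]
      exact commGame_of_conn ⟨a, Finset.mem_insert_self _ _⟩ hconnP v
    have cgWj : ∀ j ≤ m, commGame G v (W.erase (q j)) = v (A j) + v (B j) := by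
      intro j hj
      rw [hsplit1 j hj]
      apply commGame_pair (hconnA j hj) (hconnB j hj) (hAne j) (hBne j) (hdisj1 j hj)
      intro x hx y hy
      rw [hmemA] at hx
      rw [hmemB] at hy
      rcases hy with rfl | ⟨t, ht1, ht2, rfl⟩
      · rcases hx with rfl | ⟨s, hs, rfl⟩
        · exact hadj
        · intro hc
          have := hbq s (by omega) hc.symm
          omega
      · rcases hx with rfl | ⟨s, hs, rfl⟩
        · intro hc
          have := haq t ht2 hc
          omega
        · exact hchord s t (by omega) ht2
    have cgPj : ∀ j ≤ m, commGame G v ((W.erase b).erase (q j)) = v (A j) + v (Bq j) := by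
      intro j hj
      rw [hWb, hsplit2 j hj]
      by_cases hjm : j < m
      · exact commGame_pair (hconnA j hj) (hconnBq j hjm) (hAne j) (hBqne j hjm)
          (hdisj2 j) (hcross2 j hj) v
      · have hjeq : j = m := by omega
        rw [hjeq]
        rw [hBqm]
        rw [Finset.union_empty, commGame_of_conn (hAne m) (hconnA m le_rfl) v, hv0]
        ring
    have hDj : ∀ j ≤ m, commGame G v W - commGame G v (W.erase (q j)) -
        commGame G v (W.erase b) + commGame G v ((W.erase b).erase (q j)) =
        -(if j < m then (1:ℝ) else 0) := by
      intro j hj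
      rw [cgW, cgWb, cgWj j hj, cgPj j hj, hvW, hvP, hvA j hj, hvB j hj, hvBq j]
      ring
    have hineq := hpres v hv0 hconv (W.erase b) W hWbW
    have hkey : ∑ i ∈ W.erase b, wbar ω p W i * (commGame G v W -
        commGame G v (W.erase i) - commGame G v (W.erase b) +
        commGame G v ((W.erase b).erase i)) < 0 := by
      rw [← Finset.add_sum_erase _ _ hq0Wb]
      have h1 : wbar ω p W (q 0) * (commGame G v W - commGame G v (W.erase (q 0)) -
          commGame G v (W.erase b) + commGame G v ((W.erase b).erase (q 0))) =
          - ω (q 0) := by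
        rw [hwbar_q 0 (by omega), hDj 0 (by omega), if_pos (by omega : 0 < m)]
        ring
      rw [h1]
      have h2 : ∑ i ∈ (W.erase b).erase (q 0), wbar ω p W i * (commGame G v W -
          commGame G v (W.erase i) - commGame G v (W.erase b) +
          commGame G v ((W.erase b).erase i)) ≤ 0 := by
        apply Finset.sum_nonpos
        intro i hi
        have hi' := Finset.mem_of_mem_erase hi
        rw [Finset.mem_erase, hmemW] at hi'
        obtain ⟨hib, rfl | rfl | ⟨t, ht, rfl⟩⟩ := hi'
        · rw [hwbar_a, zero_mul]
        · exact absurd rfl hib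
        · rw [hwbar_q t ht, hDj t ht]
          apply mul_nonpos_of_nonneg_of_nonpos (hω _).le
          split <;> norm_num
      linarith [hω (q 0)]
    exact absurd hineq (not_le.2 hkey)



end
end LCAux

/-- If `G` preserves `(ω,Σ)`-convexity (with at least two priority levels), `k ≤ k' < k''`,
and connected components `C₁` of `G_k` and `C₂` of `G_{k'}` are both linked to a connected
component `C` of `G_{k''}`, then `C₁` and `C₂` are both linked to a common vertex of `C`. -/

theorem linked_components_common_vertex [Fintype α] [DecidableEq α]
    (ω : α → ℝ) (hω : ∀ i, 0 < ω i) (p : α → ℕ) (hp : ∀ i, 1 ≤ p i)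
    (htwo : ∃ i j : α, p i ≠ p j)
    (G : SimpleGraph α) (hpres : Preserves G ω p)
    (k k' k'' : ℕ) (hkk' : k ≤ k') (hk'k'' : k' < k'')
    (x₁ x₂ x₃ : α) (h₁ : p x₁ = k) (h₂ : p x₂ = k') (h₃ : p x₃ = k'')
    (hL₁ : Linked G (compOf G (level p k) x₁) (compOf G (level p k'') x₃))
    (hL₂ : Linked G (compOf G (level p k') x₂) (compOf G (level p k'') x₃)) :
    ∃ i ∈ compOf G (level p k'') x₃,
      (∃ a ∈ compOf G (level p k) x₁, G.Adj a i) ∧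
      (∃ b ∈ compOf G (level p k') x₂, G.Adj b i) := by
  classical
  by_contra hneg
  set C₁ : Finset α := compOf G (level p k) x₁ with hC1def
  set C₂ : Finset α := compOf G (level p k') x₂ with hC2def
  set C : Finset α := compOf G (level p k'') x₃ with hCdef
  have hdisjN : ∀ i, i ∈ C → (∃ u ∈ C₁, G.Adj u i) → (∃ u ∈ C₂, G.Adj u i) → False :=
    fun i hi h1 h2 => hneg ⟨i, hi, h1, h2⟩
  have hCmem : ∀ y, y ∈ C ↔ y ∈ level p k'' ∧
      Relation.ReflTransGen (LCAux.rel G (level p k'')) x₃ y := fun y => LCAux.mem_compOf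
  have hClevel : ∀ y ∈ C, p y = k'' := by
    intro y hy
    have h1 := ((hCmem y).1 hy).1
    simpa [level] using h1
  have hCstep : ∀ y ∈ C, ∀ z, LCAux.rel G (level p k'') y z → z ∈ C := by
    intro y hy z hz
    exact (hCmem z).2 ⟨hz.2.1, Relation.ReflTransGen.tail ((hCmem y).1 hy).2 hz⟩
  -- attachment sets
  set N₁ : Finset α := C.filter (fun i => ∃ u ∈ C₁, G.Adj u i) with hN1def
  set N₂ : Finset α := C.filter (fun i => ∃ u ∈ C₂, G.Adj u i) with hN2def
  have hN1ne : N₁.Nonempty := by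
    obtain ⟨u, hu, c, hc, hadj⟩ := hL₁
    exact ⟨c, Finset.mem_filter.2 ⟨hc, u, hu, hadj⟩⟩
  have hN2ne : N₂.Nonempty := by
    obtain ⟨u, hu, c, hc, hadj⟩ := hL₂
    exact ⟨c, Finset.mem_filter.2 ⟨hc, u, hu, hadj⟩⟩
  -- path existence from reflexive-transitive closures
  have hpath : ∀ y z : α, Relation.ReflTransGen (LCAux.rel G (level p k'')) y z →
      ∃ (n : ℕ) (f : ℕ → α), f 0 = y ∧ f n = z ∧
        ∀ i < n, LCAux.rel G (level p k'') (f i) (f (i+1)) := by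
    intro y z h
    induction h with
    | refl => exact ⟨0, fun _ => y, rfl, rfl, by omega⟩
    | @tail c d hyc hcd ih =>
      obtain ⟨n, f, h0, hn, hsp⟩ := ih
      refine ⟨n+1, fun i => if i = n+1 then d else f i,
        by show (if 0 = n+1 then d else f 0) = y; rw [if_neg (by omega)]; exact h0,
        by show (if n+1 = n+1 then d else f (n+1)) = d; rw [if_pos rfl], ?_⟩
      intro i hi
      show LCAux.rel G (level p k'') (if i = n+1 then d else f i)
        (if i+1 = n+1 then d else f (i+1))
      by_cases hin : i = n
      · rw [if_neg (by omega), if_pos (by omega), hin, hn]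
        exact hcd
      · rw [if_neg (by omega), if_neg (by omega)]
        exact hsp i (by omega)
  have hPex : ∃ n : ℕ, ∃ f : ℕ → α, f 0 ∈ N₁ ∧ f n ∈ N₂ ∧
      ∀ i < n, LCAux.rel G (level p k'') (f i) (f (i+1)) := by
    obtain ⟨c1, hc1⟩ := hN1ne
    obtain ⟨c2, hc2⟩ := hN2ne
    have h1 : Relation.ReflTransGen (LCAux.rel G (level p k'')) x₃ c1 :=
      ((hCmem c1).1 (Finset.mem_filter.1 hc1).1).2
    have h2 : Relation.ReflTransGen (LCAux.rel G (level p k'')) x₃ c2 :=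
      ((hCmem c2).1 (Finset.mem_filter.1 hc2).1).2
    have h3 : Relation.ReflTransGen (LCAux.rel G (level p k'')) c1 c2 :=
      (LCAux.rtg_symm (fun {u w} h => LCAux.rel_symm h) h1).trans h2
    obtain ⟨n, f, h0, hn, hsp⟩ := hpath c1 c2 h3
    exact ⟨n, f, h0 ▸ hc1, hn ▸ hc2, hsp⟩
  -- a shortest such path
  set m : ℕ := Nat.find hPex with hmdef
  obtain ⟨q, hq0, hqm, hqstep⟩ := Nat.find_spec hPex
  have hmin : ∀ n, n < m → ¬ (∃ f : ℕ → α, f 0 ∈ N₁ ∧ f n ∈ N₂ ∧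
      ∀ i < n, LCAux.rel G (level p k'') (f i) (f (i+1))) := fun n hn => Nat.find_min hPex hn
  have hqC : ∀ i, i ≤ m → q i ∈ C := by
    intro i
    induction i with
    | zero => exact fun _ => (Finset.mem_filter.1 hq0).1
    | succ t ih => exact fun h => hCstep (q t) (ih (by omega)) _ (hqstep t (by omega))
  have hpq : ∀ j ≤ m, p (q j) = k'' := fun j hj => hClevel _ (hqC j hj)
  have hstep' : ∀ i < m, G.Adj (q i) (q (i+1)) := fun i hi => (hqstep i hi).2.2
  have hN1only : ∀ j ≤ m, q j ∈ N₁ → j = 0 := by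
    intro j hj hmem
    by_contra hj0
    refine hmin (m - j) (by omega) ⟨fun t => q (j + t), by simpa using hmem, ?_, ?_⟩
    · show q (j + (m - j)) ∈ N₂
      rw [show j + (m - j) = m by omega]
      exact hqm
    · intro t ht
      show LCAux.rel G (level p k'') (q (j + t)) (q (j + (t+1)))
      have := hqstep (j + t) (by omega)
      rwa [show j + t + 1 = j + (t+1) by omega] at this
  have hN2only : ∀ j ≤ m, q j ∈ N₂ → j = m := by
    intro j hj hmem
    by_contra hjm
    exact hmin j (by omega) ⟨q, hq0, hmem, fun i hi => hqstep i (by omega)⟩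
  have hm1 : 1 ≤ m := by
    by_contra hm0
    have h0 : (0:ℕ) ≤ m := by omega
    have hq0' : q 0 ∈ N₂ := by
      have : m = 0 := by omega
      rwa [← this]
    obtain ⟨hc, u1, hu1, hadj1⟩ := Finset.mem_filter.1 hq0
    obtain ⟨-, u2, hu2, hadj2⟩ := Finset.mem_filter.1 hq0'
    exact hdisjN (q 0) hc ⟨u1, hu1, hadj1⟩ ⟨u2, hu2, hadj2⟩
  have hshort : ∀ i j, i < j → j ≤ m → q i = q j → False := by
    intro i j hij hjm heq
    refine hmin (m - (j - i)) (by omega)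
      ⟨fun t => if t ≤ i then q t else q (t + (j - i)), by simpa using hq0, ?_, ?_⟩
    · show (if m - (j - i) ≤ i then q (m - (j - i)) else q (m - (j - i) + (j - i))) ∈ N₂
      by_cases hc : m - (j - i) ≤ i
      · have h1 : m - (j - i) = i := by omega
        have h2 : j = m := by omega
        rw [if_pos hc, h1, heq, h2]
        exact hqm
      · rw [if_neg hc, show m - (j - i) + (j - i) = m by omega]
        exact hqm
    · intro t ht
      show LCAux.rel G (level p k'') (if t ≤ i then q t else q (t + (j - i)))
        (if t + 1 ≤ i then q (t+1) else q (t + 1 + (j - i)))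
      by_cases h1 : t < i
      · rw [if_pos (by omega), if_pos (by omega)]
        exact hqstep t (by omega)
      · by_cases h2 : t = i
        · rw [if_pos (by omega), if_neg (by omega), h2, heq,
            show i + 1 + (j - i) = j + 1 by omega]
          exact hqstep j (by omega)
        · rw [if_neg (by omega), if_neg (by omega)]
          have := hqstep (t + (j - i)) (by omega)
          rwa [show t + (j - i) + 1 = t + 1 + (j - i) by omega] at this
  have hinj : ∀ i ≤ m, ∀ j ≤ m, q i = q j → i = j := by
    intro i hi j hj heq
    rcases Nat.lt_trichotomy i j with h | h | h
    · exact absurd (hshort i j h hj heq) (fun hf => hf)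
    · exact h
    · exact absurd (hshort j i h hi heq.symm) (fun hf => hf)
  have hcut : ∀ i j, i + 1 < j → j ≤ m → ¬ LCAux.rel G (level p k'') (q i) (q j) := by
    intro i j h1 h2 hrel
    refine hmin (m - (j - i - 1)) (by omega)
      ⟨fun t => if t ≤ i then q t else q (t + (j - i - 1)), by simpa using hq0, ?_, ?_⟩
    · show (if m - (j - i - 1) ≤ i then q (m - (j - i - 1))
        else q (m - (j - i - 1) + (j - i - 1))) ∈ N₂
      rw [if_neg (by omega), show m - (j - i - 1) + (j - i - 1) = m by omega]
      exact hqm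
    · intro t ht
      show LCAux.rel G (level p k'') (if t ≤ i then q t else q (t + (j - i - 1)))
        (if t + 1 ≤ i then q (t+1) else q (t + 1 + (j - i - 1)))
      by_cases hc1 : t < i
      · rw [if_pos (by omega), if_pos (by omega)]
        exact hqstep t (by omega)
      · by_cases hc2 : t = i
        · rw [if_pos (by omega), if_neg (by omega), hc2,
            show i + 1 + (j - i - 1) = j by omega]
          exact hrel
        · rw [if_neg (by omega), if_neg (by omega)]
          have := hqstep (t + (j - i - 1)) (by omega)
          rwa [show t + (j - i - 1) + 1 = t + 1 + (j - i - 1) by omega] at this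
  have hchord : ∀ i j, i + 1 < j → j ≤ m → ¬ G.Adj (q i) (q j) := by
    intro i j h1 h2 hadj
    refine hcut i j h1 h2 ⟨?_, ?_, hadj⟩
    · exact ((hCmem _).1 (hqC i (by omega))).1
    · exact ((hCmem _).1 (hqC j h2)).1
  -- the endpoints a and b
  obtain ⟨hq0C, a, haC1, ha0⟩ := Finset.mem_filter.1 hq0
  obtain ⟨hqmC, b, hbC2, hbm⟩ := Finset.mem_filter.1 hqm
  have hpa : p a < k'' := by
    have h1 : a ∈ level p k := (LCAux.mem_compOf.1 haC1).1
    have h2 : p a = k := by simpa [level] using h1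
    omega
  have hpb : p b < k'' := by
    have h1 : b ∈ level p k' := (LCAux.mem_compOf.1 hbC2).1
    have h2 : p b = k' := by simpa [level] using h1
    omega
  have haq : ∀ j ≤ m, G.Adj a (q j) → j = 0 := by
    intro j hj hadj
    exact hN1only j hj (Finset.mem_filter.2 ⟨hqC j hj, a, haC1, hadj⟩)
  have hbq : ∀ j ≤ m, G.Adj b (q j) → j = m := by
    intro j hj hadj
    exact hN2only j hj (Finset.mem_filter.2 ⟨hqC j hj, b, hbC2, hadj⟩)
  have hab : a ≠ b := by
    rintro rfl
    have h0 : q 0 ∈ N₂ := Finset.mem_filter.2 ⟨hq0C, a, hbC2, ha0⟩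
    have := hN2only 0 (by omega) h0
    omega
  exact LCAux.path_contradiction G ω hω p k'' a b q m hm1 hpa hpb hpq hinj hstep' hchord
    ha0 hbm haq hbq hab hpres


end
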